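/- arXiv:2309.07261 — 2 statements merged into one kernel-verified Lean document; each statement's English description precedes it below -/
import Mathlib

section
/- Let R ⊆ ℝ be an open interval and A : ℝ → ℝ be twice differentiable on R with A''(θ) ≥ κ₁ ≥ 0 for all θ ∈ R. Let Y, Θ₁, Θ₂ ∈ ℝ^{n×p} with all entries of Θ₁ and Θ₂ in R, and let r₁ = rank(Θ₁), r₂ = rank(Θ₂). Then L(Θ₂) − L(Θ₁) ≤ (√(r₁+r₂)/n) · ‖Y − A'(Θ₂)‖_op · ‖Θ₁ − Θ₂‖_F − (κ₁/(2n)) · ‖Θ₁ − Θ₂‖_F². (First inequality of Lemma B.1, the upper bound on the likelihood difference.) -/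
open Matrix MeasureTheory
open scoped BigOperators ENNReal

noncomputable def opNorm {m n : ℕ} (M : Matrix (Fin m) (Fin n) ℝ) : ℝ :=
  ‖LinearMap.toContinuousLinearMap (Matrix.toEuclideanLin M)‖

noncomputable def frobNorm {m n : ℕ} (M : Matrix (Fin m) (Fin n) ℝ) : ℝ :=
  Real.sqrt (∑ i, ∑ j, (M i j) ^ 2)

noncomputable def euclNorm {k : ℕ} (v : Fin k → ℝ) : ℝ :=
  Real.sqrt (∑ i, (v i) ^ 2)

noncomputable def proj {p r : ℕ} (Γ : Matrix (Fin p) (Fin r) ℝ) : Matrix (Fin p) (Fin p) ℝ :=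
  Γ * (Γᵀ * Γ)⁻¹ * Γᵀ

noncomputable def nthLargestEigenvalue {p : ℕ} (M : Matrix (Fin p) (Fin p) ℝ) (k : ℕ) : ℝ :=
  if h : M.IsHermitian then (List.insertionSort (· ≥ ·) (List.ofFn h.eigenvalues)).getD (k - 1) 0
  else 0

/-- Negative log-likelihood `L(Θ) = (1/n)(−tr(YᵀΘ) + Σ_{i,j} A(Θ_{ij}))`. -/
noncomputable def negLogLik {n p : ℕ} (A : ℝ → ℝ)
    (Y Θ : Matrix (Fin n) (Fin p) ℝ) : ℝ :=
  (1 / (n : ℝ)) * (-(Yᵀ * Θ).trace + ∑ i, ∑ j, A (Θ i j))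


section Stmt6Aux


lemma taylor_aux {R : Set ℝ} (hRopen : IsOpen R) (hRconv : Convex ℝ R)
    (A A' A'' : ℝ → ℝ) (hA' : ∀ θ ∈ R, HasDerivAt A (A' θ) θ)
    (hA'' : ∀ θ ∈ R, HasDerivAt A' (A'' θ) θ) (κ : ℝ)
    (hκle : ∀ θ ∈ R, κ ≤ A'' θ) {a b : ℝ} (ha : a ∈ R) (hb : b ∈ R) :
    A b + A' b * (a - b) + κ / 2 * (a - b) ^ 2 ≤ A a := by
  set g : ℝ → ℝ := fun θ => A θ - κ / 2 * θ ^ 2 with hg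
  have hg' : ∀ θ ∈ R, HasDerivAt g (A' θ - κ * θ) θ := by
    intro θ hθ
    have h2 : HasDerivAt (fun θ : ℝ => κ / 2 * θ ^ 2) (κ * θ) θ := by
      have := (hasDerivAt_pow 2 θ).const_mul (κ / 2)
      simpa using this.congr_deriv (by ring)
    exact (hA' θ hθ).sub h2
  have hderiv : ∀ θ ∈ R, deriv g θ = A' θ - κ * θ := fun θ hθ => (hg' θ hθ).deriv
  have hconv : ConvexOn ℝ R g := by
    apply convexOn_of_deriv2_nonneg hRconv
    · exact fun θ hθ => ((hg' θ hθ).continuousAt).continuousWithinAt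
    · rw [hRopen.interior_eq]
      exact fun θ hθ => ((hg' θ hθ).differentiableAt).differentiableWithinAt
    · rw [hRopen.interior_eq]
      intro θ hθ
      have heq : deriv g =ᶠ[nhds θ] fun x => A' x - κ * x :=
        Filter.eventually_of_mem (hRopen.mem_nhds hθ) (fun x hx => hderiv x hx)
      have h2 : HasDerivAt (fun x => A' x - κ * x) (A'' θ - κ) θ :=
        (hA'' θ hθ).sub (by simpa using (hasDerivAt_id θ).const_mul κ)
      exact (h2.differentiableAt.congr_of_eventuallyEq heq).differentiableWithinAt
    · rw [hRopen.interior_eq]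
      intro θ hθ
      have heq : deriv g =ᶠ[nhds θ] fun x => A' x - κ * x :=
        Filter.eventually_of_mem (hRopen.mem_nhds hθ) (fun x hx => hderiv x hx)
      have h2 : HasDerivAt (fun x => A' x - κ * x) (A'' θ - κ) θ :=
        (hA'' θ hθ).sub (by simpa using (hasDerivAt_id θ).const_mul κ)
      have : deriv^[2] g θ = A'' θ - κ := by
        simp only [Function.iterate_succ, Function.iterate_zero, Function.comp_apply, id]
        rw [Filter.EventuallyEq.deriv_eq heq, h2.deriv]
      rw [this]
      linarith [hκle θ hθ]
  have key : (A' b - κ * b) * (a - b) ≤ g a - g b := by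
    rcases lt_trichotomy b a with h | h | h
    · have := hconv.le_slope_of_hasDerivAt hb ha h (hg' b hb)
      rw [slope_def_field] at this
      have h0 : (0:ℝ) < a - b := by linarith
      calc (A' b - κ * b) * (a - b) ≤ (g a - g b) / (a - b) * (a - b) := by
            exact mul_le_mul_of_nonneg_right this h0.le
        _ = g a - g b := by field_simp
    · simp [h]
    · have := hconv.slope_le_of_hasDerivAt ha hb h (hg' b hb)
      rw [slope_def_field] at this
      have h0 : (0:ℝ) < b - a := by linarith
      have := mul_le_mul_of_nonneg_right this h0.le
      rw [div_mul_cancel₀] at this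
      · linarith
      · linarith
  simp only [hg] at key
  nlinarith [key]

lemma opNorm_nonneg {m n : ℕ} (M : Matrix (Fin m) (Fin n) ℝ) : 0 ≤ opNorm M :=
  norm_nonneg _

lemma mulVec_le_opNorm {m n : ℕ} (M : Matrix (Fin m) (Fin n) ℝ)
    (v : EuclideanSpace ℝ (Fin n)) :
    ‖Matrix.toEuclideanLin M v‖ ≤ opNorm M * ‖v‖ := by
  have := (LinearMap.toContinuousLinearMap (Matrix.toEuclideanLin M)).le_opNorm v
  simpa [opNorm] using this

lemma trace_bound {n p : ℕ} (M D : Matrix (Fin n) (Fin p) ℝ) :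
    ∑ i, ∑ j, M i j * D i j ≤ Real.sqrt (D.rank : ℝ) * opNorm M * frobNorm D := by
  classical
  set W : Submodule ℝ (EuclideanSpace ℝ (Fin p)) := LinearMap.range (Matrix.toEuclideanLin Dᵀ)
    with hW
  -- finrank of W equals rank of D
  have hWrank : Module.finrank ℝ W = D.rank := by
    have hWmap : W = Submodule.map
        ((WithLp.linearEquiv 2 ℝ (Fin p → ℝ)).symm : (Fin p → ℝ) →ₗ[ℝ] EuclideanSpace ℝ (Fin p))
        (LinearMap.range (Dᵀ.mulVecLin)) := by
      ext x
      constructor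
      · rintro ⟨y, rfl⟩
        exact ⟨Dᵀ *ᵥ (WithLp.equiv 2 (Fin n → ℝ)) y, ⟨(WithLp.equiv 2 (Fin n → ℝ)) y, rfl⟩, rfl⟩
      · rintro ⟨w, ⟨v, rfl⟩, rfl⟩
        exact ⟨(WithLp.equiv 2 (Fin n → ℝ)).symm v, rfl⟩
    rw [hWmap]
    rw [LinearEquiv.finrank_map_eq]
    rw [← Matrix.rank_transpose D]
    rfl
  set r : ℕ := Module.finrank ℝ W with hr
  have b : OrthonormalBasis (Fin r) ℝ W := stdOrthonormalBasis ℝ W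
  set v : Fin r → EuclideanSpace ℝ (Fin p) := fun k => (b k : EuclideanSpace ℝ (Fin p)) with hv
  -- rows of D
  set d : Fin n → EuclideanSpace ℝ (Fin p) :=
    fun i => (WithLp.equiv 2 (Fin p → ℝ)).symm (D i) with hd
  have hdW : ∀ i, d i ∈ W := by
    intro i
    refine ⟨(WithLp.equiv 2 (Fin n → ℝ)).symm (Pi.single i 1), ?_⟩
    rw [WithLp.equiv_symm_apply, Matrix.toEuclideanLin_apply_piLp_toLp]
    congr 1
    rw [Matrix.mulVec_single_one]; rfl
  set c : Fin n → Fin r → ℝ := fun i k => (inner ℝ (v k) (d i) : ℝ) with hc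
  -- reconstruction of rows
  have hrec : ∀ i, d i = ∑ k, c i k • v k := by
    intro i
    have hsum := b.sum_repr ⟨d i, hdW i⟩
    calc d i = ((⟨d i, hdW i⟩ : W) : EuclideanSpace ℝ (Fin p)) := rfl
      _ = ((∑ k, b.repr ⟨d i, hdW i⟩ k • b k : W) : EuclideanSpace ℝ (Fin p)) := by
          rw [hsum]
      _ = ∑ k, c i k • v k := by
          rw [Submodule.coe_sum]
          refine Finset.sum_congr rfl fun k _ => ?_
          rw [Submodule.coe_smul, b.repr_apply_apply]
          rfl
  -- Parseval per row
  have hpars : ∀ i, ∑ k, c i k ^ 2 = ∑ j, (D i j) ^ 2 := by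
    intro i
    have h1 : ‖b.repr ⟨d i, hdW i⟩‖ ^ 2 = ‖(⟨d i, hdW i⟩ : W)‖ ^ 2 := by
      rw [b.repr.norm_map]
    have hnc : ‖(⟨d i, hdW i⟩ : W)‖ = ‖d i‖ := rfl
    rw [EuclideanSpace.norm_eq, hnc] at h1
    rw [EuclideanSpace.norm_eq] at h1
    rw [Real.sq_sqrt (by positivity), Real.sq_sqrt (by positivity)] at h1
    have h2 : ∀ k, b.repr ⟨d i, hdW i⟩ k = c i k := by
      intro k
      rw [b.repr_apply_apply]
      rfl
    calc ∑ k, c i k ^ 2 = ∑ k, ‖b.repr ⟨d i, hdW i⟩ k‖ ^ 2 := by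
          refine Finset.sum_congr rfl fun k _ => ?_
          rw [h2 k]; rw [Real.norm_eq_abs, sq_abs]
      _ = ∑ j, ‖d i j‖ ^ 2 := h1
      _ = ∑ j, (D i j) ^ 2 := by
          refine Finset.sum_congr rfl fun j _ => ?_
          rw [Real.norm_eq_abs, sq_abs]; rfl
  -- main expansion
  have hvapp : ∀ k i, (Matrix.toEuclideanLin M (v k)) i = ∑ j, M i j * v k j := by
    intro k i
    rfl
  have hsumapp : ∀ i j, D i j = ∑ k, c i k * v k j := by
    intro i j
    have h0 : d i j = D i j := rfl
    rw [← h0, hrec i]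
    rw [WithLp.ofLp_sum, Finset.sum_apply]
    rfl
  have hmain : ∑ i, ∑ j, M i j * D i j
      = ∑ k, ∑ i, c i k * (∑ j, M i j * v k j) := by
    have hrow : ∀ i, ∑ j, M i j * D i j = ∑ k, c i k * (∑ j, M i j * v k j) := by
      intro i
      calc ∑ j, M i j * D i j = ∑ j, ∑ k, M i j * (c i k * v k j) := by
            refine Finset.sum_congr rfl fun j _ => ?_
            rw [hsumapp i j, Finset.mul_sum]
        _ = ∑ k, ∑ j, M i j * (c i k * v k j) := Finset.sum_comm
        _ = ∑ k, c i k * (∑ j, M i j * v k j) := by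
            refine Finset.sum_congr rfl fun k _ => ?_
            rw [Finset.mul_sum]
            exact Finset.sum_congr rfl fun j _ => by ring
    rw [Finset.sum_congr rfl fun i _ => hrow i]
    exact Finset.sum_comm
  -- bound each k-term
  have hnormv : ∀ k, ‖v k‖ = 1 := fun k => b.orthonormal.1 k
  have hkey : ∀ k, ∑ i, c i k * (∑ j, M i j * v k j)
      ≤ Real.sqrt (∑ i, c i k ^ 2) * opNorm M := by
    intro k
    have hcs := Real.sum_mul_le_sqrt_mul_sqrt Finset.univ
      (fun i => c i k) (fun i => ∑ j, M i j * v k j)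
    refine hcs.trans ?_
    refine mul_le_mul_of_nonneg_left ?_ (Real.sqrt_nonneg _)
    have h1 : Real.sqrt (∑ i, (∑ j, M i j * v k j) ^ 2) = ‖Matrix.toEuclideanLin M (v k)‖ := by
      rw [EuclideanSpace.norm_eq]
      congr 1
      refine Finset.sum_congr rfl fun i _ => ?_
      rw [hvapp k i, Real.norm_eq_abs, sq_abs]
    rw [h1]
    have := mulVec_le_opNorm M (v k)
    rw [hnormv k, mul_one] at this
    exact this
  -- sum over k
  have hsum2 : ∑ k, Real.sqrt (∑ i, c i k ^ 2)
      ≤ Real.sqrt (r : ℝ) * frobNorm D := by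
    have hcs2 := Real.sum_sqrt_mul_sqrt_le (f := fun k : Fin r => ∑ i, c i k ^ 2)
      (g := fun _ : Fin r => (1 : ℝ)) Finset.univ
      (fun k => Finset.sum_nonneg fun i _ => sq_nonneg _) (fun _ => zero_le_one)
    simp only [Real.sqrt_one, mul_one] at hcs2
    have htot : ∑ k, ∑ i, c i k ^ 2 = ∑ i, ∑ j, (D i j) ^ 2 := by
      rw [Finset.sum_comm]
      exact Finset.sum_congr rfl fun i _ => hpars i
    rw [htot] at hcs2
    refine hcs2.trans ?_
    have h1 : ∑ _k : Fin r, (1 : ℝ) = (r : ℝ) := by simp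
    rw [h1, frobNorm, mul_comm]
  calc ∑ i, ∑ j, M i j * D i j = ∑ k, ∑ i, c i k * (∑ j, M i j * v k j) := hmain
    _ ≤ ∑ k, Real.sqrt (∑ i, c i k ^ 2) * opNorm M :=
        Finset.sum_le_sum fun k _ => hkey k
    _ = (∑ k, Real.sqrt (∑ i, c i k ^ 2)) * opNorm M := by rw [Finset.sum_mul]
    _ ≤ Real.sqrt (r : ℝ) * frobNorm D * opNorm M :=
        mul_le_mul_of_nonneg_right hsum2 (opNorm_nonneg M)
    _ = Real.sqrt ((D.rank : ℝ)) * opNorm M * frobNorm D := by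
        rw [hWrank]; ring

lemma rank_sub_le' {n p : ℕ} (A B : Matrix (Fin n) (Fin p) ℝ) :
    (A - B).rank ≤ A.rank + B.rank := by
  have hle : LinearMap.range (A - B).mulVecLin ≤
      LinearMap.range A.mulVecLin ⊔ LinearMap.range B.mulVecLin := by
    rintro x ⟨y, rfl⟩
    have h : (A - B).mulVecLin y = A.mulVecLin y - B.mulVecLin y := by
      simp [Matrix.mulVecLin_apply, Matrix.sub_mulVec]
    rw [h]
    exact Submodule.sub_mem _ (Submodule.mem_sup_left ⟨y, rfl⟩)
      (Submodule.mem_sup_right ⟨y, rfl⟩)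
  calc (A - B).rank
      ≤ Module.finrank ℝ (LinearMap.range A.mulVecLin ⊔ LinearMap.range B.mulVecLin :
        Submodule ℝ (Fin n → ℝ)) := Submodule.finrank_mono hle
    _ ≤ A.rank + B.rank := Submodule.finrank_add_le_finrank_add_finrank _ _

end Stmt6Aux

/-- first inequality of Lemma B.1 (upper bound on the likelihood
difference, with curvature lower bound `κ₁`). -/
theorem stmt6 {n p : ℕ} (R : Set ℝ) (hRopen : IsOpen R) (hRconv : Convex ℝ R)
    (A A' A'' : ℝ → ℝ)
    (hA' : ∀ θ ∈ R, HasDerivAt A (A' θ) θ)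
    (hA'' : ∀ θ ∈ R, HasDerivAt A' (A'' θ) θ)
    (κ₁ : ℝ) (hκ₁ : 0 ≤ κ₁) (hκ₁le : ∀ θ ∈ R, κ₁ ≤ A'' θ)
    (Y Θ₁ Θ₂ : Matrix (Fin n) (Fin p) ℝ)
    (hΘ₁ : ∀ i j, Θ₁ i j ∈ R) (hΘ₂ : ∀ i j, Θ₂ i j ∈ R) :
    negLogLik A Y Θ₂ - negLogLik A Y Θ₁ ≤
      (Real.sqrt ((Θ₁.rank : ℝ) + (Θ₂.rank : ℝ)) / (n : ℝ)) *
          opNorm (Y - Matrix.of fun i j => A' (Θ₂ i j)) * frobNorm (Θ₁ - Θ₂) -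
        (κ₁ / (2 * (n : ℝ))) * frobNorm (Θ₁ - Θ₂) ^ 2 := by
  classical
  set M : Matrix (Fin n) (Fin p) ℝ := Y - Matrix.of fun i j => A' (Θ₂ i j) with hM
  set Δ : Matrix (Fin n) (Fin p) ℝ := Θ₁ - Θ₂ with hΔ
  have hΔapp : ∀ i j, Δ i j = Θ₁ i j - Θ₂ i j := fun i j => rfl
  have hMapp : ∀ i j, M i j = Y i j - A' (Θ₂ i j) := fun i j => rfl
  set F : ℝ := frobNorm Δ with hF
  have hFnn : 0 ≤ F := Real.sqrt_nonneg _
  have hF2 : F ^ 2 = ∑ i, ∑ j, (Δ i j) ^ 2 := by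
    rw [hF, frobNorm, Real.sq_sqrt]
    positivity
  -- trace rewrite
  have htr : ∀ X : Matrix (Fin n) (Fin p) ℝ,
      (Yᵀ * X).trace = ∑ i, ∑ j, Y i j * X i j := by
    intro X
    rw [Matrix.trace]
    simp only [Matrix.diag, Matrix.mul_apply, Matrix.transpose_apply]
    exact Finset.sum_comm
  have hL : negLogLik A Y Θ₂ - negLogLik A Y Θ₁ =
      (1 / (n : ℝ)) * ((∑ i, ∑ j, Y i j * Δ i j) +
        ((∑ i, ∑ j, A (Θ₂ i j)) - (∑ i, ∑ j, A (Θ₁ i j)))) := by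
    rw [negLogLik, negLogLik, htr Θ₁, htr Θ₂]
    have hYd : ∑ i, ∑ j, Y i j * Δ i j =
        (∑ i, ∑ j, Y i j * Θ₁ i j) - ∑ i, ∑ j, Y i j * Θ₂ i j := by
      simp [hΔapp, mul_sub, Finset.sum_sub_distrib]
    rw [hYd]; ring
  -- strong convexity bound
  have hA : (∑ i, ∑ j, A (Θ₂ i j)) - (∑ i, ∑ j, A (Θ₁ i j)) ≤
      -(∑ i, ∑ j, A' (Θ₂ i j) * Δ i j) - κ₁ / 2 * (∑ i, ∑ j, (Δ i j) ^ 2) := by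
    have h1 : ∑ i, ∑ j, (A (Θ₂ i j) + A' (Θ₂ i j) * Δ i j + κ₁ / 2 * (Δ i j) ^ 2) ≤
        ∑ i, ∑ j, A (Θ₁ i j) := by
      refine Finset.sum_le_sum fun i _ => Finset.sum_le_sum fun j _ => ?_
      rw [hΔapp]
      exact taylor_aux hRopen hRconv A A' A'' hA' hA'' κ₁ hκ₁le (hΘ₁ i j) (hΘ₂ i j)
    have h2 : ∑ i, ∑ j, (A (Θ₂ i j) + A' (Θ₂ i j) * Δ i j + κ₁ / 2 * (Δ i j) ^ 2) =
        (∑ i, ∑ j, A (Θ₂ i j)) + (∑ i, ∑ j, A' (Θ₂ i j) * Δ i j) +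
          κ₁ / 2 * (∑ i, ∑ j, (Δ i j) ^ 2) := by
      simp [Finset.sum_add_distrib, Finset.mul_sum]
    linarith [h1, h2.symm.trans_le h1]
  -- combine
  have hMd : ∑ i, ∑ j, M i j * Δ i j =
      (∑ i, ∑ j, Y i j * Δ i j) - ∑ i, ∑ j, A' (Θ₂ i j) * Δ i j := by
    simp [hMapp, sub_mul, Finset.sum_sub_distrib]
  have hTB := trace_bound M Δ
  have hrank : Real.sqrt ((Δ.rank : ℝ)) ≤ Real.sqrt ((Θ₁.rank : ℝ) + (Θ₂.rank : ℝ)) := by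
    apply Real.sqrt_le_sqrt
    have := rank_sub_le' Θ₁ Θ₂
    exact_mod_cast this
  have hTB2 : ∑ i, ∑ j, M i j * Δ i j ≤
      Real.sqrt ((Θ₁.rank : ℝ) + (Θ₂.rank : ℝ)) * opNorm M * F := by
    refine hTB.trans ?_
    refine mul_le_mul_of_nonneg_right (mul_le_mul_of_nonneg_right hrank (opNorm_nonneg M)) hFnn
  have hinner : (∑ i, ∑ j, Y i j * Δ i j) +
      ((∑ i, ∑ j, A (Θ₂ i j)) - (∑ i, ∑ j, A (Θ₁ i j))) ≤
      Real.sqrt ((Θ₁.rank : ℝ) + (Θ₂.rank : ℝ)) * opNorm M * F - κ₁ / 2 * F ^ 2 := by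
    rw [hF2]
    linarith [hA, hMd, hTB2]
  rw [hL]
  have hn : (0 : ℝ) ≤ 1 / (n : ℝ) := by positivity
  calc (1 / (n : ℝ)) * _ ≤ (1 / (n : ℝ)) *
      (Real.sqrt ((Θ₁.rank : ℝ) + (Θ₂.rank : ℝ)) * opNorm M * F - κ₁ / 2 * F ^ 2) :=
        mul_le_mul_of_nonneg_left hinner hn
    _ = (Real.sqrt ((Θ₁.rank : ℝ) + (Θ₂.rank : ℝ)) / (n : ℝ)) * opNorm M * F -
        (κ₁ / (2 * (n : ℝ))) * F ^ 2 := by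
        rcases eq_or_ne (n : ℝ) 0 with h | h
        · simp [h]
        · field_simp
end

section
/- Let E, Δ ∈ ℝ^{n×p} and set Ê := E + Δ. Suppose Ê = √(np)·U Σ Vᵀ, where U ∈ ℝ^{n×r} and V ∈ ℝ^{p×r} satisfy UᵀU = VᵀV = I_r and Σ ∈ ℝ^{r×r} is diagonal with strictly positive diagonal entries. Define Γ̂ := √p·V Σ^{1/2} and Γ̃ := (1/(n√p))·EᵀE V Σ^{−3/2}, and let γ̂_j, γ̃_j denote their j-th rows and E_j, Δ_j the j-th columns of E, Δ. Then for every j ∈ {1,…,p}: ‖γ̂_j − γ̃_j‖₂ ≤ (1/(n√p))·(‖E‖_op‖Δ_j‖₂ + ‖Δ‖_op‖E_j‖₂ + ‖Δ‖_op‖Δ_j‖₂)·‖Σ^{−3/2}‖_op, and moreover ‖Γ̂ − Γ̃‖_op ≤ (1/(n√p))·(2‖E‖_op‖Δ‖_op + ‖Δ‖_op²)·‖Σ^{−3/2}‖_op. (Row-wise and operator-norm bounds from the proof of Lemma C.1.) -/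
set_option maxHeartbeats 1000000

open Matrix MeasureTheory
open scoped BigOperators ENNReal

section Aux
open scoped Matrix.Norms.L2Operator

lemma opNorm_eq_norm {m n : ℕ} (M : Matrix (Fin m) (Fin n) ℝ) : opNorm M = ‖M‖ := rfl

lemma normT13 {m n : ℕ} (M : Matrix (Fin m) (Fin n) ℝ) : ‖Mᵀ‖ = ‖M‖ := by
  rw [← Matrix.l2_opNorm_conjTranspose M]
  congr 1

lemma norm_one_le13 {r : ℕ} : ‖(1 : Matrix (Fin r) (Fin r) ℝ)‖ ≤ 1 := by
  rw [Matrix.cstar_norm_def, _root_.map_one]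
  exact ContinuousLinearMap.norm_id_le

lemma euclNorm_eq {k : ℕ} (v : Fin k → ℝ) :
    euclNorm v = ‖(EuclideanSpace.equiv (Fin k) ℝ).symm v‖ := by
  rw [EuclideanSpace.norm_eq]
  simp [euclNorm, sq_abs]

lemma euclNorm_vecMul_le {a b : ℕ} (x : Fin a → ℝ) (M : Matrix (Fin a) (Fin b) ℝ) :
    euclNorm (x ᵥ* M) ≤ ‖M‖ * euclNorm x := by
  rw [euclNorm_eq, euclNorm_eq, ← Matrix.mulVec_transpose, ← normT13 M]
  exact Matrix.l2_opNorm_mulVec Mᵀ ((EuclideanSpace.equiv (Fin a) ℝ).symm x)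

lemma euclNorm_smul13 {k : ℕ} (c : ℝ) (v : Fin k → ℝ) :
    euclNorm (c • v) = |c| * euclNorm v := by
  rw [euclNorm_eq, euclNorm_eq, ← Real.norm_eq_abs, ← norm_smul]
  congr 1

lemma euclNorm_add_le13 {k : ℕ} (u v : Fin k → ℝ) :
    euclNorm (u + v) ≤ euclNorm u + euclNorm v := by
  rw [euclNorm_eq, euclNorm_eq, euclNorm_eq]
  exact norm_add_le _ _

lemma euclNorm_nonneg13 {k : ℕ} (v : Fin k → ℝ) : 0 ≤ euclNorm v := Real.sqrt_nonneg _

lemma row_mul13 {a b c : ℕ} (A : Matrix (Fin a) (Fin b) ℝ) (B : Matrix (Fin b) (Fin c) ℝ)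
    (i : Fin a) : (A * B) i = A i ᵥ* B := by
  ext k
  simp [Matrix.mul_apply, Matrix.vecMul, dotProduct]

end Aux

open scoped Matrix.Norms.L2Operator

/-- row-wise and operator-norm bounds on `Γ̂ − Γ̃` from the proof of
Lemma C.1, where `Ê = E + Δ = √(np)·U Σ Vᵀ`, `Γ̂ = √p·V Σ^{1/2}` and
`Γ̃ = (1/(n√p))·EᵀE V Σ^{−3/2}`. -/
theorem stmt13 {n p r : ℕ} (E Δ : Matrix (Fin n) (Fin p) ℝ)
    (U : Matrix (Fin n) (Fin r) ℝ) (V : Matrix (Fin p) (Fin r) ℝ)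
    (S : Matrix (Fin r) (Fin r) ℝ)
    (hU : Uᵀ * U = 1) (hV : Vᵀ * V = 1)
    (hSdiag : ∀ i j, i ≠ j → S i j = 0) (hSpos : ∀ i, 0 < S i i)
    (hsvd : E + Δ = Real.sqrt ((n : ℝ) * p) • (U * S * Vᵀ))
    (Γh Γt : Matrix (Fin p) (Fin r) ℝ)
    (hΓh : Γh = Real.sqrt p • (V * Matrix.diagonal fun i => Real.sqrt (S i i)))
    (hΓt : Γt = (1 / ((n : ℝ) * Real.sqrt p)) •
      (Eᵀ * E * V * Matrix.diagonal fun i => (S i i) ^ (-(3 / 2) : ℝ))) :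
    (∀ j : Fin p,
      euclNorm (Γh j - Γt j) ≤
        (1 / ((n : ℝ) * Real.sqrt p)) *
          (opNorm E * euclNorm (fun i => Δ i j) +
            opNorm Δ * euclNorm (fun i => E i j) +
              opNorm Δ * euclNorm (fun i => Δ i j)) *
            opNorm (Matrix.diagonal fun i => (S i i) ^ (-(3 / 2) : ℝ))) ∧
    opNorm (Γh - Γt) ≤
      (1 / ((n : ℝ) * Real.sqrt p)) *
        (2 * opNorm E * opNorm Δ + opNorm Δ ^ 2) *
          opNorm (Matrix.diagonal fun i => (S i i) ^ (-(3 / 2) : ℝ)) := by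
  classical
  rcases Nat.eq_zero_or_pos p with hp | hp
  · subst hp
    refine ⟨fun j => j.elim0, ?_⟩
    have hz : Γh - Γt = 0 := by ext i j; exact i.elim0
    rw [hz, opNorm_eq_norm]
    simp
  rcases Nat.eq_zero_or_pos n with hn | hn
  · subst hn
    have hr : r = 0 := by
      by_contra h
      have hi : Fin r := ⟨0, Nat.pos_of_ne_zero h⟩
      have h2 := congrFun (congrFun hU hi) hi
      simp [Matrix.mul_apply, Matrix.one_apply] at h2
    subst hr
    constructor
    · intro j
      have h0 : euclNorm (Γh j - Γt j) = 0 := by simp [euclNorm]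
      rw [h0]
      simp
    · have hz : Γh - Γt = 0 := by ext i j; exact j.elim0
      rw [hz, opNorm_eq_norm]
      simp
  -- main case
  have hpR : (0:ℝ) < p := by exact_mod_cast hp
  have hnR : (0:ℝ) < n := by exact_mod_cast hn
  have hsp : 0 < Real.sqrt p := Real.sqrt_pos.mpr hpR
  set c : ℝ := 1 / ((n : ℝ) * Real.sqrt p) with hc
  have hc0 : 0 ≤ c := by positivity
  set D : Matrix (Fin r) (Fin r) ℝ :=
    Matrix.diagonal fun i => (S i i) ^ (-(3 / 2) : ℝ) with hD
  set A : Matrix (Fin p) (Fin p) ℝ := Eᵀ * Δ + Δᵀ * E + Δᵀ * Δ with hA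
  have hS : S = Matrix.diagonal fun i => S i i := by
    ext i j
    rcases eq_or_ne i j with h | h
    · subst h; simp
    · rw [hSdiag i j h, Matrix.diagonal_apply_ne _ h]
  have hsq : Real.sqrt ((n:ℝ)*p) * Real.sqrt ((n:ℝ)*p) = (n:ℝ)*p :=
    Real.mul_self_sqrt (by positivity)
  have h1 : (E + Δ)ᵀ * (E + Δ)
      = ((n:ℝ) * p) • (V * (Matrix.diagonal fun i => S i i * S i i) * Vᵀ) := by
    rw [hsvd, Matrix.transpose_smul, Matrix.smul_mul, Matrix.mul_smul, smul_smul, hsq]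
    congr 1
    have h1' : (U*S*Vᵀ)ᵀ * (U*S*Vᵀ) = V * (Sᵀ * ((Uᵀ*U) * (S*Vᵀ))) := by
      simp [Matrix.transpose_mul, Matrix.mul_assoc]
    rw [h1', hU, Matrix.one_mul]
    rw [show Sᵀ = S by rw [hS]; exact Matrix.diagonal_transpose _]
    nth_rewrite 1 [hS]; nth_rewrite 2 [hS]
    rw [← Matrix.mul_assoc (Matrix.diagonal fun i => S i i), Matrix.diagonal_mul_diagonal]
    rw [Matrix.mul_assoc]
  have h2 : ((E + Δ)ᵀ * (E + Δ)) * (V * D)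
      = ((n:ℝ) * p) • (V * Matrix.diagonal fun i => Real.sqrt (S i i)) := by
    rw [h1, Matrix.smul_mul]
    congr 1
    calc (V * (Matrix.diagonal fun i => S i i * S i i) * Vᵀ) * (V * D)
        = V * ((Matrix.diagonal fun i => S i i * S i i) * ((Vᵀ * V) * D)) := by
          simp [Matrix.mul_assoc]
      _ = V * ((Matrix.diagonal fun i => S i i * S i i) * D) := by
          rw [hV, Matrix.one_mul]
      _ = V * Matrix.diagonal fun i => Real.sqrt (S i i) := by
          rw [hD, Matrix.diagonal_mul_diagonal]
          have hfg : (fun i => S i i * S i i * S i i ^ (-(3 / 2) : ℝ))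
              = fun i => Real.sqrt (S i i) := by
            funext i
            have hx := hSpos i
            have hxx : S i i * S i i = (S i i) ^ (2:ℝ) := by
              rw [show ((2:ℝ) = ((2:ℕ):ℝ)) by norm_num, Real.rpow_natCast]; ring
            rw [hxx, ← Real.rpow_add hx, Real.sqrt_eq_rpow]
            norm_num
          rw [hfg]
  have hΓh' : Γh = c • ((E + Δ)ᵀ * (E + Δ) * (V * D)) := by
    rw [h2, smul_smul, hΓh]
    congr 1
    rw [hc, eq_comm, div_mul_eq_mul_div, one_mul,
      div_eq_iff (by positivity : ((n:ℝ) * Real.sqrt p) ≠ 0)]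
    have hms := Real.mul_self_sqrt hpR.le
    nlinarith [hms]
  have hexp : (E + Δ)ᵀ * (E + Δ) = Eᵀ * E + A := by
    rw [hA, Matrix.transpose_add, Matrix.add_mul, Matrix.mul_add, Matrix.mul_add]
    abel
  have key : Γh - Γt = c • (A * (V * D)) := by
    rw [hΓh', hΓt, hexp, Matrix.add_mul, ← smul_sub]
    congr 1
    rw [Matrix.mul_assoc (Eᵀ * E)]
    abel
  -- norms
  have hV1 : ‖V‖ ≤ 1 := by
    have e0 : Vᴴ = Vᵀ := by ext i j; simp [Matrix.conjTranspose_apply]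
    have e1 : ‖V‖ * ‖V‖ = ‖(1 : Matrix (Fin r) (Fin r) ℝ)‖ := by
      rw [← Matrix.l2_opNorm_conjTranspose_mul_self V, e0, hV]
    nlinarith [norm_nonneg V, norm_one_le13 (r := r)]
  have hVD : ‖V * D‖ ≤ ‖D‖ := by
    calc ‖V * D‖ ≤ ‖V‖ * ‖D‖ := Matrix.l2_opNorm_mul V D
      _ ≤ 1 * ‖D‖ := mul_le_mul_of_nonneg_right hV1 (norm_nonneg D)
      _ = ‖D‖ := one_mul _
  constructor
  · intro j
    simp only [opNorm_eq_norm]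
    have hrowkey : Γh j - Γt j = c • ((A j) ᵥ* (V * D)) := by
      funext k
      have h := congrFun (congrFun key j) k
      have h2' := congrFun (row_mul13 A (V * D) j) k
      simp only [Matrix.sub_apply, Matrix.smul_apply, Pi.sub_apply, Pi.smul_apply,
        smul_eq_mul] at h h2' ⊢
      rw [h, h2']
    have e1 : euclNorm ((Eᵀ * Δ) j) ≤ ‖Δ‖ * euclNorm (fun i => E i j) := by
      rw [row_mul13]
      have ht : Eᵀ j = fun i => E i j := by ext i; simp
      rw [ht]
      exact euclNorm_vecMul_le _ Δ
    have e2 : euclNorm ((Δᵀ * E) j) ≤ ‖E‖ * euclNorm (fun i => Δ i j) := by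
      rw [row_mul13]
      have ht : Δᵀ j = fun i => Δ i j := by ext i; simp
      rw [ht]
      exact euclNorm_vecMul_le _ E
    have e3 : euclNorm ((Δᵀ * Δ) j) ≤ ‖Δ‖ * euclNorm (fun i => Δ i j) := by
      rw [row_mul13]
      have ht : Δᵀ j = fun i => Δ i j := by ext i; simp
      rw [ht]
      exact euclNorm_vecMul_le _ Δ
    have hAj : euclNorm (A j)
        ≤ ‖E‖ * euclNorm (fun i => Δ i j) + ‖Δ‖ * euclNorm (fun i => E i j)
            + ‖Δ‖ * euclNorm (fun i => Δ i j) := by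
      have hsplit : A j = ((Eᵀ * Δ) j + (Δᵀ * E) j) + (Δᵀ * Δ) j := rfl
      rw [hsplit]
      have t1 := euclNorm_add_le13 ((Eᵀ * Δ) j + (Δᵀ * E) j) ((Δᵀ * Δ) j)
      have t2 := euclNorm_add_le13 ((Eᵀ * Δ) j) ((Δᵀ * E) j)
      linarith
    have hstep : euclNorm (Γh j - Γt j) ≤ c * (‖D‖ * euclNorm (A j)) := by
      rw [hrowkey, euclNorm_smul13, abs_of_nonneg hc0]
      have := euclNorm_vecMul_le (A j) (V * D)
      have h3 : euclNorm ((A j) ᵥ* (V * D)) ≤ ‖D‖ * euclNorm (A j) :=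
        le_trans this (mul_le_mul_of_nonneg_right hVD (euclNorm_nonneg13 _))
      exact mul_le_mul_of_nonneg_left h3 hc0
    have hfin : c * (‖D‖ * euclNorm (A j))
        ≤ c * (‖E‖ * euclNorm (fun i => Δ i j) + ‖Δ‖ * euclNorm (fun i => E i j)
            + ‖Δ‖ * euclNorm (fun i => Δ i j)) * ‖D‖ := by
      have w1 := mul_le_mul_of_nonneg_left hAj (norm_nonneg D)
      have w2 := mul_le_mul_of_nonneg_left w1 hc0
      calc c * (‖D‖ * euclNorm (A j))
          ≤ c * (‖D‖ * (‖E‖ * euclNorm (fun i => Δ i j) + ‖Δ‖ * euclNorm (fun i => E i j)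
              + ‖Δ‖ * euclNorm (fun i => Δ i j))) := w2
        _ = c * (‖E‖ * euclNorm (fun i => Δ i j) + ‖Δ‖ * euclNorm (fun i => E i j)
              + ‖Δ‖ * euclNorm (fun i => Δ i j)) * ‖D‖ := by ring
    linarith
  · simp only [opNorm_eq_norm]
    rw [key, norm_smul, Real.norm_eq_abs, abs_of_nonneg hc0]
    have t1 : ‖Eᵀ * Δ‖ ≤ ‖E‖ * ‖Δ‖ := by
      have := Matrix.l2_opNorm_mul Eᵀ Δ
      rwa [normT13] at this
    have t2 : ‖Δᵀ * E‖ ≤ ‖Δ‖ * ‖E‖ := by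
      have := Matrix.l2_opNorm_mul Δᵀ E
      rwa [normT13] at this
    have t3 : ‖Δᵀ * Δ‖ ≤ ‖Δ‖ * ‖Δ‖ := by
      have := Matrix.l2_opNorm_mul Δᵀ Δ
      rwa [normT13] at this
    have hAn : ‖A‖ ≤ 2 * ‖E‖ * ‖Δ‖ + ‖Δ‖ ^ 2 := by
      have u1 := norm_add_le (Eᵀ * Δ + Δᵀ * E) (Δᵀ * Δ)
      have u2 := norm_add_le (Eᵀ * Δ) (Δᵀ * E)
      have : ‖A‖ ≤ ‖Eᵀ * Δ‖ + ‖Δᵀ * E‖ + ‖Δᵀ * Δ‖ := by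
        rw [hA]; linarith
      nlinarith [this]
    have hmul : ‖A * (V * D)‖ ≤ ‖A‖ * ‖V * D‖ := Matrix.l2_opNorm_mul A (V * D)
    have hDn : 0 ≤ ‖D‖ := norm_nonneg _
    have hVDn : 0 ≤ ‖V * D‖ := norm_nonneg _
    have hAn0 : 0 ≤ ‖A‖ := norm_nonneg _
    have hB0 : 0 ≤ 2 * ‖E‖ * ‖Δ‖ + ‖Δ‖ ^ 2 := by positivity
    have : ‖A * (V * D)‖ ≤ (2 * ‖E‖ * ‖Δ‖ + ‖Δ‖ ^ 2) * ‖D‖ := by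
      calc ‖A * (V * D)‖ ≤ ‖A‖ * ‖V * D‖ := hmul
        _ ≤ (2 * ‖E‖ * ‖Δ‖ + ‖Δ‖ ^ 2) * ‖D‖ := by
            exact mul_le_mul hAn hVD hVDn hB0
    calc c * ‖A * (V * D)‖ ≤ c * ((2 * ‖E‖ * ‖Δ‖ + ‖Δ‖ ^ 2) * ‖D‖) :=
          mul_le_mul_of_nonneg_left this hc0
      _ = c * (2 * ‖E‖ * ‖Δ‖ + ‖Δ‖ ^ 2) * ‖D‖ := by ring
end
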